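/- Let (μ_n)_{n∈ω} be a sequence in the unit ball of ℓ₁(ω × {0,1}) satisfying μ_n({(k,0)}) = −μ_n({(k,1)}) for all n, k ∈ ω, with b := inf_n |μ_n({(n,0)})| > 0, and let C₀ ⊆ ω be infinite. Then there exist infinite sets J₂ ⊆ J₁ ⊆ J₀ ⊆ C₀ with J₀ \ J₁ and J₁ \ J₂ infinite, a set Z splitting the cylinder J₁ × {0,1}, and constants a ≥ b, 0 < δ < b/11 such that |μ_n(Z) − μ_n((J₁×{0,1}) \ Z) − 2a| < 3δ for n ∈ J₂, |μ_n(Z) − μ_n((J₁×{0,1}) \ Z) + 2a| < 3δ for n ∈ J₁ \ J₂, and |μ_n(Z) − μ_n((J₁×{0,1}) \ Z)| < 3δ for n ∈ J₀ \ J₁. -/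

import Mathlib

/-- `Z` splits the cylinder `C₀ × {0,1}`. -/
def Splits (C₀ : Set ℕ) (B : Set (ℕ × Bool)) : Prop :=
  B ⊆ C₀ ×ˢ (Set.univ : Set Bool) ∧ ∀ n ∈ C₀, Xor' ((n, false) ∈ B) ((n, true) ∈ B)

open Filter Topology

lemma tail_small' {f : ℕ → ℝ} (hf : Summable f) {ε : ℝ} (hε : 0 < ε) :
    ∃ N, ∑' k, f (k + N) < ε := by
  have ht := hf.hasSum.tendsto_sum_nat
  have h2 : ∀ᶠ N in atTop, (∑' k, f k) - ε < ∑ i ∈ Finset.range N, f i :=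
    ht.eventually (eventually_gt_nhds (by linarith))
  obtain ⟨N, hN⟩ := h2.exists
  refine ⟨N, ?_⟩
  have h3 := Summable.sum_add_tsum_nat_add N hf
  linarith

lemma tsum_subtype_le_tail {f : ℕ → ℝ} (hf : Summable f) (h0 : ∀ k, 0 ≤ f k)
    {S : Set ℕ} {m : ↥S → ℕ} (hm : Function.Injective m) {N : ℕ} (hmN : ∀ s, N ≤ m s) :
    ∑' s : S, f (m s) ≤ ∑' k, f (k + N) := by
  refine Summable.tsum_le_tsum_of_inj (fun s => m s - N) ?_ (fun c _ => h0 _) (fun s => ?_) ?_ ?_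
  · intro s t hst
    apply hm
    have := hmN s; have := hmN t
    simp only at hst
    omega
  · have : m s - N + N = m s := by have := hmN s; omega
    rw [this]
  · exact hf.comp_injective hm
  · exact (summable_nat_add_iff N).2 hf

lemma tsum_subtype_mono {f : ℕ → ℝ} (h0 : ∀ k, 0 ≤ f k) (hf : Summable f) {S T : Set ℕ}
    (hST : S ⊆ T) : ∑' s : S, f s ≤ ∑' t : T, f t :=
  Summable.tsum_le_tsum_of_inj (Set.inclusion hST) (Set.inclusion_injective hST)
    (fun _ _ => h0 _) (fun _ => le_rfl) (hf.subtype _) (hf.subtype _)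

lemma mod3_infinite (r : ℕ) (hr : r < 3) : {j : ℕ | j % 3 = r}.Infinite := by
  apply Set.infinite_of_injective_forall_mem (f := fun t : ℕ => 3 * t + r)
  · intro s t hst; simp only at hst; omega
  · intro t; simp only [Set.mem_setOf_eq]; omega

theorem stmt_8 (x : ℕ → ℕ × Bool → ℝ)
    (hsum : ∀ n, Summable fun s => |x n s|)
    (hball : ∀ n, ∑' s, |x n s| ≤ 1)
    (hanti : ∀ n k : ℕ, x n (k, false) = - x n (k, true))
    (b : ℝ) (hb : 0 < b)
    (hbinf : IsGLB (Set.range fun n => |x n (n, false)|) b)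
    (C₀ : Set ℕ) (hC₀ : C₀.Infinite) :
    ∃ (J₀ J₁ J₂ : Set ℕ) (Z : Set (ℕ × Bool)) (a δ : ℝ),
      J₂ ⊆ J₁ ∧ J₁ ⊆ J₀ ∧ J₀ ⊆ C₀ ∧
      J₂.Infinite ∧ (J₁ \ J₂).Infinite ∧ (J₀ \ J₁).Infinite ∧
      Splits J₁ Z ∧ b ≤ a ∧ 0 < δ ∧ δ < b / 11 ∧
      (∀ n ∈ J₂,
        |(∑' s : ↥Z, x n ↑s) - (∑' s : ↥((J₁ ×ˢ (Set.univ : Set Bool)) \ Z), x n ↑s)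
          - 2 * a| < 3 * δ) ∧
      (∀ n ∈ J₁ \ J₂,
        |(∑' s : ↥Z, x n ↑s) - (∑' s : ↥((J₁ ×ˢ (Set.univ : Set Bool)) \ Z), x n ↑s)
          + 2 * a| < 3 * δ) ∧
      ∀ n ∈ J₀ \ J₁,
        |(∑' s : ↥Z, x n ↑s) - (∑' s : ↥((J₁ ×ˢ (Set.univ : Set Bool)) \ Z), x n ↑s)|
          < 3 * δ := by
  classical
  haveI := hC₀.to_subtype
  set e := Nat.orderEmbeddingOfSet C₀ with he_def
  have heC : ∀ n, (e n : ℕ) ∈ C₀ := by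
    intro n
    have h := Nat.orderEmbeddingOfSet_range (s := C₀)
    rw [← h]; exact ⟨n, rfl⟩
  have hpt : ∀ n s, |x n s| ≤ 1 := fun n s =>
    (Summable.le_tsum (hsum n) s fun _ _ => abs_nonneg _).trans (hball n)
  have hbd : ∀ n, b ≤ |x n (n, false)| := fun n => hbinf.1 ⟨n, rfl⟩
  -- compactness step
  set u : ℕ → (ℕ × Bool → ℝ) × ℝ := fun i => (x (e i), |x (e i) (e i, false)|) with hu_def
  have hK : IsCompact ((Set.univ.pi fun _ : ℕ × Bool => Set.Icc (-1:ℝ) 1) ×ˢ Set.Icc b 1) :=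
    (isCompact_univ_pi fun _ => isCompact_Icc).prod isCompact_Icc
  have huK : ∀ i, u i ∈ ((Set.univ.pi fun _ : ℕ × Bool => Set.Icc (-1:ℝ) 1) ×ˢ Set.Icc b 1) := by
    intro i
    refine ⟨fun s _ => abs_le.1 (hpt (e i) s), ⟨hbd (e i), hpt (e i) _⟩⟩
  obtain ⟨⟨y, a⟩, hyaK, φ, hφ, hconv⟩ := hK.tendsto_subseq huK
  have hba : b ≤ a := hyaK.2.1
  have hfst : Tendsto (fun i => (u (φ i)).1) atTop (𝓝 y) :=
    (continuous_fst.tendsto ((y, a) : (ℕ × Bool → ℝ) × ℝ)).comp hconv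
  have hxy : ∀ s, Tendsto (fun i => x (e (φ i)) s) atTop (𝓝 (y s)) := fun s =>
    tendsto_pi_nhds.1 hfst s
  have hav : Tendsto (fun i => |x (e (φ i)) (e (φ i), false)|) atTop (𝓝 a) :=
    (continuous_snd.tendsto ((y, a) : (ℕ × Bool → ℝ) × ℝ)).comp hconv
  set g : ℕ → ℕ := fun i => e (φ i) with hg_def
  have hg : StrictMono g := e.strictMono.comp hφ
  -- constants
  set δ : ℝ := b / 22 with hδ_def
  have hδ : 0 < δ := by positivity
  -- y summability
  set fy : ℕ → ℝ := fun k => |y (k, false)| with hfy_def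
  have hfbool : Function.Injective (fun k : ℕ => ((k, false) : ℕ × Bool)) := by
    intro s t hst; simpa using hst
  have hfy : Summable fy := by
    refine summable_of_sum_le (c := 1) (fun k => abs_nonneg _) (fun s => ?_)
    have hlim : Tendsto (fun i => ∑ k ∈ s, |x (g i) (k, false)|) atTop
        (𝓝 (∑ k ∈ s, fy k)) := by
      refine tendsto_finset_sum _ fun k _ => ?_
      exact (hxy (k, false)).abs
    refine le_of_tendsto hlim (Eventually.of_forall fun i => ?_)
    calc ∑ k ∈ s, |x (g i) (k, false)|
        = ∑ p ∈ s.image (fun k => ((k, false) : ℕ × Bool)), |x (g i) p| :=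
          by rw [Finset.sum_image (fun p _ q _ h => hfbool h)]
      _ ≤ ∑' p, |x (g i) p| := Summable.sum_le_tsum _ (fun _ _ => abs_nonneg _) (hsum (g i))
      _ ≤ 1 := hball _
  have hxnf : ∀ n, Summable fun k => x n (k, false) := fun n =>
    ((hsum n).of_abs).comp_injective hfbool
  have hyf : Summable fun k => y (k, false) := hfy.of_abs
  set fν : ℕ → ℕ → ℝ := fun i k => |x (g i) (k, false) - y (k, false)| with hfν_def
  have hfνs : ∀ i, Summable (fν i) := fun i => ((hxnf (g i)).sub hyf).abs
  have htail : ∀ i, ∃ N, ∑' k, fν i (k + N) < δ / 16 := fun i =>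
    tail_small' (hfνs i) (by positivity)
  choose Tail hTail using htail
  obtain ⟨N₀, hN₀⟩ : ∃ N₀, ∑' k, fy (k + N₀) < δ / 8 := tail_small' hfy (by positivity)
  have hν0 : ∀ k, Tendsto (fun i => fν i k) atTop (𝓝 0) := by
    intro k
    have h1 := ((hxy (k, false)).sub (tendsto_const_nhds (x := y (k, false)))).abs
    simpa using h1
  obtain ⟨Na, hNa⟩ := Metric.tendsto_atTop.1 hav (δ / 4) (by positivity)
  -- recursive construction
  have hstep : ∀ j p : ℕ, ∃ i, p < i ∧ Tail p ≤ i ∧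
      ∀ k ≤ g p, fν i k < δ / (32 * (j + 1)) := by
    intro j p
    have h1 : ∀ᶠ i in atTop, ∀ k ∈ Finset.range (g p + 1), fν i k < δ / (32 * (j + 1)) := by
      rw [eventually_all_finset]
      intro k _
      exact (hν0 k).eventually (eventually_lt_nhds (by positivity))
    obtain ⟨i, hi⟩ := ((eventually_gt_atTop p).and ((eventually_ge_atTop (Tail p)).and h1)).exists
    exact ⟨i, hi.1, hi.2.1, fun k hk => hi.2.2 k (Finset.mem_range.2 (by omega))⟩
  set h : ℕ → ℕ := fun j => Nat.rec (max Na N₀) (fun j ih => (hstep j ih).choose) j with hh_def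
  have hspec : ∀ j, h j < h (j + 1) ∧ Tail (h j) ≤ h (j + 1) ∧
      ∀ k ≤ g (h j), fν (h (j + 1)) k < δ / (32 * (j + 1)) := fun j =>
    (hstep j (h j)).choose_spec
  have hhmono : StrictMono h := strictMono_nat_of_lt_succ fun j => (hspec j).1
  have hh0 : h 0 = max Na N₀ := rfl
  set m : ℕ → ℕ := fun j => g (h j) with hm_def
  have hmmono : StrictMono m := hg.comp hhmono
  have hminj : Function.Injective m := hmmono.injective
  have hmN₀ : ∀ j, N₀ ≤ m j := by
    intro j
    have h1 : N₀ ≤ h 0 := by rw [hh0]; exact le_max_right _ _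
    exact h1.trans ((hhmono.monotone (Nat.zero_le j)).trans (hg.le_apply))
  have hmdiag : ∀ j, |(|x (m j) (m j, false)|) - a| < δ / 4 := by
    intro j
    have h1 : Na ≤ h j := (le_max_left _ _).trans_eq hh0.symm |>.trans
      (hhmono.monotone (Nat.zero_le j))
    have := hNa (h j) h1
    rwa [Real.dist_eq] at this
  have hFsum : ∀ n, Summable fun k => |x n (k, false)| := fun n => (hxnf n).abs
  -- the key cross-term estimate
  have E2 : ∀ j : ℕ, ∑' l : ({j}ᶜ : Set ℕ), |x (m j) (m ↑l, false)| < δ / 2 := by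
    intro j
    have hsub1 : Summable fun l : ({j}ᶜ : Set ℕ) => fy (m ↑l) :=
      (hfy.comp_injective hminj).subtype _
    have hsub2 : Summable fun l : ({j}ᶜ : Set ℕ) => fν (h j) (m ↑l) :=
      ((hfνs (h j)).comp_injective hminj).subtype _
    have hsub0 : Summable fun l : ({j}ᶜ : Set ℕ) => |x (m j) (m ↑l, false)| :=
      ((hFsum (m j)).comp_injective hminj).subtype _
    have step1 : ∑' l : ({j}ᶜ : Set ℕ), |x (m j) (m ↑l, false)|
        ≤ (∑' l : ({j}ᶜ : Set ℕ), fy (m ↑l)) + ∑' l : ({j}ᶜ : Set ℕ), fν (h j) (m ↑l) := by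
      rw [← Summable.tsum_add hsub1 hsub2]
      refine Summable.tsum_le_tsum (fun l => ?_) hsub0 (hsub1.add hsub2)
      have h1 : x (m j) (m ↑l, false)
          = y (m ↑l, false) + (x (m j) (m ↑l, false) - y (m ↑l, false)) := by ring
      calc |x (m j) (m ↑l, false)|
          = |y (m ↑l, false) + (x (m j) (m ↑l, false) - y (m ↑l, false))| := by rw [← h1]
        _ ≤ fy (m ↑l) + fν (h j) (m ↑l) := abs_add_le _ _
    have tA : ∑' l : ({j}ᶜ : Set ℕ), fy (m ↑l) ≤ ∑' k, fy (k + N₀) :=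
      tsum_subtype_le_tail hfy (fun k => abs_nonneg _)
        (hminj.comp Subtype.val_injective) (fun s => hmN₀ _)
    have hset : ({j}ᶜ : Set ℕ) = Set.Iio j ∪ Set.Ioi j := by
      ext l
      simp only [Set.mem_compl_iff, Set.mem_singleton_iff, Set.mem_union, Set.mem_Iio,
        Set.mem_Ioi]
      omega
    have hνnn : ∀ k, 0 ≤ fν (h j) k := fun k => abs_nonneg _
    have tB : ∑' l : ({j}ᶜ : Set ℕ), fν (h j) (m ↑l)
        = (∑' l : (Set.Iio j : Set ℕ), fν (h j) (m ↑l))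
          + ∑' l : (Set.Ioi j : Set ℕ), fν (h j) (m ↑l) := by
      rw [hset]
      exact Summable.tsum_union_disjoint (f := fun l => fν (h j) (m l)) ((Set.Iio_disjoint_Ici le_rfl).mono_right Set.Ioi_subset_Ici_self)
        (((hfνs (h j)).comp_injective hminj).subtype _)
        (((hfνs (h j)).comp_injective hminj).subtype _)
    have tB1 : ∑' l : (Set.Iio j : Set ℕ), fν (h j) (m ↑l) ≤ δ / 32 := by
      have hcoe : (Set.Iio j : Set ℕ) = ((Finset.range j : Finset ℕ) : Set ℕ) := by
        simp [Finset.coe_range]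
      rw [hcoe, Finset.tsum_subtype' (Finset.range j) (fun l => fν (h j) (m l))]
      rcases Nat.eq_zero_or_pos j with hj | hj
      · subst hj; simp; positivity
      · obtain ⟨jj, rfl⟩ := Nat.exists_eq_add_of_lt hj
        simp only [Nat.zero_add] at *
        have hbound : ∀ l ∈ Finset.range (jj + 1), fν (h (jj + 1)) (m l) ≤ δ / (32 * (jj + 1)) := by
          intro l hl
          refine le_of_lt ((hspec jj).2.2 (m l) ?_)
          exact hmmono.monotone (by simpa using Nat.lt_succ_iff.1 (Finset.mem_range.1 hl))
        calc ∑ l ∈ Finset.range (jj + 1), fν (h (jj + 1)) (m l)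
            ≤ (Finset.range (jj + 1)).card • (δ / (32 * (jj + 1))) :=
              Finset.sum_le_card_nsmul _ _ _ hbound
          _ = (jj + 1 : ℝ) * (δ / (32 * (jj + 1))) := by
              simp [nsmul_eq_mul]
          _ ≤ δ / 32 := by
              have hpos : (0:ℝ) < (jj : ℝ) + 1 := by positivity
              refine le_of_eq ?_
              field_simp
    have tB2 : ∑' l : (Set.Ioi j : Set ℕ), fν (h j) (m ↑l)
        ≤ ∑' k, fν (h j) (k + Tail (h j)) := by
      refine tsum_subtype_le_tail (hfνs (h j)) hνnn
        (hminj.comp Subtype.val_injective) (fun s => ?_)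
      show Tail (h j) ≤ m ↑s
      have h1 : Tail (h j) ≤ h (j + 1) := (hspec j).2.1
      have h2 : h (j + 1) ≤ m (j + 1) := hg.le_apply
      have h3 : m (j + 1) ≤ m ↑s := hmmono.monotone (by exact s.2)
      omega
    have := hTail (h j)
    linarith
  -- sign choices and sets
  set cc : ℕ → Bool := fun j =>
    if j % 3 = 0 then (if x (m j) (m j, false) < 0 then true else false)
    else (if 0 ≤ x (m j) (m j, false) then true else false) with hcc_def
  set w : ℕ → ℝ := fun j => if cc j then -2 else 2 with hw_def
  set A : Set ℕ := {j | j % 3 ≠ 2} with hA_def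
  set J₁ : Set ℕ := m '' A with hJ₁_def
  set Z : Set (ℕ × Bool) := (fun j => ((m j, cc j) : ℕ × Bool)) '' A with hZ_def
  have hq_inj : Function.Injective (fun j => ((m j, cc j) : ℕ × Bool)) := by
    intro s t hst
    exact hminj (congrArg Prod.fst hst)
  have hq'_inj : Function.Injective (fun j => ((m j, !cc j) : ℕ × Bool)) := by
    intro s t hst
    exact hminj (congrArg Prod.fst hst)
  have hwabs : ∀ l, |w l| ≤ 2 := by
    intro l; cases hc : cc l <;> simp [hw_def, hc]
  have hcompl : (J₁ ×ˢ (Set.univ : Set Bool)) \ Z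
      = (fun j => ((m j, !cc j) : ℕ × Bool)) '' A := by
    ext ⟨k, bb⟩
    constructor
    · rintro ⟨⟨⟨j, hjA, rfl⟩, -⟩, hnZ⟩
      refine ⟨j, hjA, ?_⟩
      rcases Bool.eq_or_eq_not bb (cc j) with hbb2 | hbb2
      · exact absurd ⟨j, hjA, by rw [hbb2]⟩ hnZ
      · rw [hbb2]
    · rintro ⟨j, hjA, hj⟩
      have h1 : m j = k := congrArg Prod.fst hj
      have h2 : (!cc j) = bb := congrArg Prod.snd hj
      subst h1; subst h2
      refine ⟨⟨⟨j, hjA, rfl⟩, trivial⟩, ?_⟩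
      rintro ⟨j', hj'A, hj'⟩
      have h2 : j' = j := hminj (congrArg Prod.fst hj')
      subst h2
      have h3 : cc j' = !cc j' := congrArg Prod.snd hj'
      simp at h3
  have hrepr : ∀ n, (∑' s : ↥Z, x n ↑s)
      - (∑' s : ↥((J₁ ×ˢ (Set.univ : Set Bool)) \ Z), x n ↑s)
      = ∑' j' : ↥A, w ↑j' * x n (m ↑j', false) := by
    intro n
    have h1 : (∑' s : ↥Z, x n ↑s) = ∑' j' : ↥A, x n (m ↑j', cc ↑j') := by
      rw [hZ_def]
      exact tsum_image (x n) hq_inj.injOn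
    have h2 : (∑' s : ↥((J₁ ×ˢ (Set.univ : Set Bool)) \ Z), x n ↑s)
        = ∑' j' : ↥A, x n (m ↑j', !cc ↑j') := by
      rw [hcompl]
      exact tsum_image (x n) hq'_inj.injOn
    have hs1 : Summable fun j' : ↥A => x n (m ↑j', cc ↑j') :=
      (((hsum n).of_abs).comp_injective hq_inj).subtype _
    have hs2 : Summable fun j' : ↥A => x n (m ↑j', !cc ↑j') :=
      (((hsum n).of_abs).comp_injective hq'_inj).subtype _
    rw [h1, h2, ← Summable.tsum_sub hs1 hs2]
    refine tsum_congr fun j' => ?_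
    have ha := hanti n (m ↑j')
    cases hccc : cc ↑j'
    · have hw' : w (↑j' : ℕ) = 2 := by rw [hw_def]; simp [hccc]
      rw [hw']
      simp only [Bool.not_false]
      linarith
    · have hw' : w (↑j' : ℕ) = -2 := by rw [hw_def]; simp [hccc]
      rw [hw']
      simp only [Bool.not_true]
      linarith
  have hwx_sum : ∀ n, Summable fun l : ℕ => w l * x n (m l, false) := by
    intro n
    refine Summable.of_abs ?_
    refine Summable.of_nonneg_of_le (fun _ => abs_nonneg _) (fun l => ?_)
      (((hFsum n).comp_injective hminj).mul_left 2)
    rw [abs_mul]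
    show |w l| * |x n (m l, false)| ≤ 2 * |x n (m l, false)|
    nlinarith [abs_nonneg (x n (m l, false)), hwabs l, abs_nonneg (w l)]
  have hrest : ∀ (j : ℕ) (S : Set ℕ), S ⊆ ({j}ᶜ : Set ℕ) →
      |∑' l : ↥S, w ↑l * x (m j) (m ↑l, false)|
        ≤ 2 * ∑' l : ({j}ᶜ : Set ℕ), |x (m j) (m ↑l, false)| := by
    intro j S hS
    have hGsum : Summable fun l : ℕ => 2 * |x (m j) (m l, false)| :=
      ((hFsum (m j)).comp_injective hminj).mul_left 2
    have hle : ∀ l : ↥S, |w ↑l * x (m j) (m ↑l, false)| ≤ 2 * |x (m j) (m ↑l, false)| := by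
      intro l
      rw [abs_mul]
      nlinarith [abs_nonneg (x (m j) (m ↑l, false)), hwabs (↑l : ℕ), abs_nonneg (w ↑l)]
    have habs_sum : Summable fun l : ↥S => |w ↑l * x (m j) (m ↑l, false)| :=
      Summable.of_nonneg_of_le (fun _ => abs_nonneg _) hle (hGsum.subtype S)
    calc |∑' l : ↥S, w ↑l * x (m j) (m ↑l, false)|
        ≤ ∑' l : ↥S, |w ↑l * x (m j) (m ↑l, false)| := by
          have hnorm : Summable fun l : ↥S => ‖w ↑l * x (m j) (m ↑l, false)‖ := by
            simpa only [Real.norm_eq_abs] using habs_sum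
          simpa only [Real.norm_eq_abs] using norm_tsum_le_tsum_norm hnorm
      _ ≤ ∑' l : ↥S, 2 * |x (m j) (m ↑l, false)| :=
          Summable.tsum_le_tsum hle habs_sum (hGsum.subtype S)
      _ ≤ ∑' l : ({j}ᶜ : Set ℕ), 2 * |x (m j) (m ↑l, false)| :=
          tsum_subtype_mono (fun l => by positivity) hGsum hS
      _ = 2 * ∑' l : ({j}ᶜ : Set ℕ), |x (m j) (m ↑l, false)| := by
          rw [← tsum_mul_left]
  have hdiag0 : ∀ j : ℕ, j % 3 = 0 →
      w j * x (m j) (m j, false) = 2 * |x (m j) (m j, false)| := by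
    intro j hj
    rcases lt_or_ge (x (m j) (m j, false)) 0 with hx | hx
    · have hcj : cc j = true := by simp [hcc_def, hj, hx]
      rw [hw_def]; simp only [hcj, if_true]
      rw [abs_of_neg hx]; ring
    · have hcj : cc j = false := by simp [hcc_def, hj, not_lt.2 hx]
      rw [hw_def]; simp only [hcj, Bool.false_eq_true, if_false]
      rw [abs_of_nonneg hx]
  have hdiag1 : ∀ j : ℕ, j % 3 = 1 →
      w j * x (m j) (m j, false) = -(2 * |x (m j) (m j, false)|) := by
    intro j hj
    rcases lt_or_ge (x (m j) (m j, false)) 0 with hx | hx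
    · have hcj : cc j = false := by simp [hcc_def, hj, not_le.2 hx]
      rw [hw_def]; simp only [hcj, Bool.false_eq_true, if_false]
      rw [abs_of_neg hx]; ring
    · have hcj : cc j = true := by simp [hcc_def, hj, hx]
      rw [hw_def]; simp only [hcj, if_true]
      rw [abs_of_nonneg hx]; ring
  have hsplit : ∀ (j : ℕ) (n : ℕ), j ∈ A →
      ∑' j' : ↥A, w ↑j' * x n (m ↑j', false)
        = w j * x n (m j, false) + ∑' l : ↥(A \ {j} : Set ℕ), w ↑l * x n (m ↑l, false) := by
    intro j n hjA
    have hA_eq : A = ({j} : Set ℕ) ∪ (A \ {j}) := by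
      ext l; by_cases hl : l = j <;> simp [hl, hjA]
    have hd : Disjoint ({j} : Set ℕ) (A \ {j}) := disjoint_sdiff_self_right
    have := Summable.tsum_union_disjoint (f := fun l => w l * x n (m l, false)) hd
      ((hwx_sum n).subtype _) ((hwx_sum n).subtype _)
    rw [← hA_eq] at this
    rw [this, tsum_singleton j (fun l => w l * x n (m l, false))]
  -- set identities
  have hJ10 : m '' A \ m '' {j | j % 3 = 0} = m '' {j | j % 3 = 1} := by
    have hstq : A \ {j | j % 3 = 0} = {j | j % 3 = 1} := by
      rw [hA_def]; ext l; simp only [Set.mem_diff, Set.mem_setOf_eq]; omega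
    rw [← Set.image_diff hminj, hstq]
  have hJ01 : m '' Set.univ \ m '' A = m '' {j | j % 3 = 2} := by
    have hstq : Set.univ \ A = {j | j % 3 = 2} := by
      rw [hA_def]; ext l
      simp only [Set.mem_diff, Set.mem_univ, Set.mem_setOf_eq, true_and]; omega
    rw [← Set.image_diff hminj, hstq]
  have hmemZ : ∀ (j : ℕ) (bb : Bool), j ∈ A → ((m j, bb) ∈ Z ↔ bb = cc j) := by
    intro j bb hjA
    constructor
    · rintro ⟨j', hj'A, hj'⟩
      have h2 : j' = j := hminj (congrArg Prod.fst hj')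
      subst h2
      exact (congrArg Prod.snd hj').symm
    · rintro rfl; exact ⟨j, hjA, rfl⟩
  refine ⟨m '' Set.univ, J₁, m '' {j | j % 3 = 0}, Z, a, δ, ?_, ?_, ?_, ?_, ?_, ?_, ?_, hba,
    hδ, by rw [hδ_def]; linarith, ?_, ?_, ?_⟩
  · refine Set.image_mono ?_
    intro l hl
    have hl' : l % 3 = 0 := hl
    rw [hA_def]; show l % 3 ≠ 2; omega
  · exact Set.image_mono (Set.subset_univ _)
  · rintro _ ⟨j, -, rfl⟩; exact heC _
  · exact (mod3_infinite 0 (by norm_num)).image hminj.injOn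
  · rw [hJ₁_def, hJ10]
    exact (mod3_infinite 1 (by norm_num)).image hminj.injOn
  · rw [hJ₁_def, hJ01]
    exact (mod3_infinite 2 (by norm_num)).image hminj.injOn
  · constructor
    · rintro p ⟨j, hjA, rfl⟩
      exact ⟨⟨j, hjA, rfl⟩, trivial⟩
    · rintro n ⟨j, hjA, rfl⟩
      cases hcj : cc j
      · exact Or.inl ⟨(hmemZ j false hjA).2 hcj.symm,
          fun hmem => by have := (hmemZ j true hjA).1 hmem; rw [hcj] at this; simp at this⟩
      · exact Or.inr ⟨(hmemZ j true hjA).2 hcj.symm,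
          fun hmem => by have := (hmemZ j false hjA).1 hmem; rw [hcj] at this; simp at this⟩
  · -- J₂ case
    rintro n ⟨j, hj0, rfl⟩
    have hj0' : j % 3 = 0 := hj0
    have hjA : j ∈ A := by rw [hA_def]; show j % 3 ≠ 2; omega
    rw [hrepr (m j), hsplit j (m j) hjA, hdiag0 j hj0']
    have hR := (hrest j (A \ {j}) (fun l hl => hl.2)).trans_lt
      (by linarith [E2 j] : 2 * ∑' l : ({j}ᶜ : Set ℕ), |x (m j) (m ↑l, false)| < δ)
    have hd := hmdiag j
    set v := x (m j) (m j, false)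
    set R := ∑' l : ↥(A \ {j} : Set ℕ), w ↑l * x (m j) (m ↑l, false)
    have h1 : |2 * |v| + R - 2 * a| ≤ |2 * |v| - 2 * a| + |R| := by
      have : 2 * |v| + R - 2 * a = (2 * |v| - 2 * a) + R := by ring
      rw [this]; exact abs_add_le _ _
    have h2 : |2 * |v| - 2 * a| = 2 * |(|v| - a)| := by
      rw [show 2 * |v| - 2 * a = 2 * (|v| - a) by ring, abs_mul, abs_two]
    linarith
  · -- J₁ \ J₂ case
    rintro n hn
    rw [hJ₁_def, hJ10] at hn
    obtain ⟨j, hj1, rfl⟩ := hn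
    have hj1' : j % 3 = 1 := hj1
    have hjA : j ∈ A := by rw [hA_def]; show j % 3 ≠ 2; omega
    rw [hrepr (m j), hsplit j (m j) hjA, hdiag1 j hj1']
    have hR := (hrest j (A \ {j}) (fun l hl => hl.2)).trans_lt
      (by linarith [E2 j] : 2 * ∑' l : ({j}ᶜ : Set ℕ), |x (m j) (m ↑l, false)| < δ)
    have hd := hmdiag j
    set v := x (m j) (m j, false)
    set R := ∑' l : ↥(A \ {j} : Set ℕ), w ↑l * x (m j) (m ↑l, false)
    have h1 : |-(2 * |v|) + R + 2 * a| ≤ |2 * |v| - 2 * a| + |R| := by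
      have he : -(2 * |v|) + R + 2 * a = -(2 * |v| - 2 * a) + R := by ring
      rw [he]
      exact (abs_add_le _ _).trans (by rw [abs_neg])
    have h2 : |2 * |v| - 2 * a| = 2 * |(|v| - a)| := by
      rw [show 2 * |v| - 2 * a = 2 * (|v| - a) by ring, abs_mul, abs_two]
    linarith
  · -- J₀ \ J₁ case
    rintro n hn
    rw [hJ₁_def, hJ01] at hn
    obtain ⟨j, hj2, rfl⟩ := hn
    have hj2' : j % 3 = 2 := hj2
    have hjA : A ⊆ ({j}ᶜ : Set ℕ) := by
      intro l hl
      rw [hA_def] at hl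
      have hl' : l % 3 ≠ 2 := hl
      simp only [Set.mem_compl_iff, Set.mem_singleton_iff]
      intro hlj; subst hlj; exact hl' hj2'
    rw [hrepr (m j)]
    have hR := (hrest j A hjA).trans_lt
      (by linarith [E2 j] : 2 * ∑' l : ({j}ᶜ : Set ℕ), |x (m j) (m ↑l, false)| < δ)
    linarith
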